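/- Let n ≥ 2 be a natural number. The n-th Gelfand number of the summation operator σ : ℓ¹ → c equals 1/2, i.e., the infimum over all closed subspaces M of ℓ¹ with codimension < n of sup{‖σ(x)‖_∞ : x ∈ M, ‖x‖₁ ≤ 1} equals 1/2. -/

import Mathlib

open scoped ENNReal

set_option maxHeartbeats 1000000
set_option synthInstance.maxHeartbeats 400000

noncomputable section

/-- The space `ℓ¹` of absolutely summable real sequences. -/
abbrev ell1 : Type := lp (fun _ : ℕ => ℝ) 1

/-- The space `ℓ^∞` of bounded real sequences with the supremum norm. -/
abbrev ellInf : Type := lp (fun _ : ℕ => ℝ) ⊤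

lemma ell1_hasSum_norm (x : ell1) : HasSum (fun i => ‖x i‖) ‖x‖ := by
  have := lp.hasSum_norm (E := fun _ : ℕ => ℝ) (p := 1) (by norm_num) x
  simpa using this

lemma ell1_summable (x : ell1) : Summable (fun i => x i) :=
  Summable.of_norm ⟨_, ell1_hasSum_norm x⟩

lemma ell1_sum_le (x : ell1) (s : Finset ℕ) : ∑ j ∈ s, ‖x j‖ ≤ ‖x‖ :=
  sum_le_hasSum s (fun _ _ => norm_nonneg _) (ell1_hasSum_norm x)

lemma single_apply' (i k : ℕ) :
    (lp.single 1 i (1:ℝ) : ell1) k = if k = i then (1:ℝ) else 0 := by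
  by_cases h : k = i
  · subst h; simp [lp.single_apply_self]
  · simp [lp.single_apply_ne 1 i _ h, h]

lemma norm_single_one (i : ℕ) : ‖(lp.single 1 i (1:ℝ) : ell1)‖ = 1 := by
  have := lp.norm_single (E := fun _ : ℕ => ℝ) (p := 1) (by norm_num) i (1:ℝ)
  simpa using this

/-- difference of two basis vectors -/
def epair (i j : ℕ) : ell1 := lp.single 1 i (1:ℝ) - lp.single 1 j (1:ℝ)

lemma epair_apply (i j k : ℕ) :
    (epair i j) k = (if k = i then (1:ℝ) else 0) - (if k = j then 1 else 0) := by
  have h1 : (epair i j) k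
      = (lp.single 1 i (1:ℝ) : ell1) k - (lp.single 1 j (1:ℝ) : ell1) k := by
    simp [epair, lp.coeFn_sub]
  rw [h1, single_apply', single_apply']

lemma norm_epair_le (i j : ℕ) : ‖epair i j‖ ≤ 2 := by
  calc ‖epair i j‖ ≤ ‖(lp.single 1 i (1:ℝ) : ell1)‖ + ‖(lp.single 1 j (1:ℝ) : ell1)‖ :=
        norm_sub_le _ _
    _ ≤ 2 := by rw [norm_single_one, norm_single_one]; norm_num

lemma epair_partial_sum (i j k : ℕ) :
    ∑ m ∈ Finset.range (k + 1), (epair i j) m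
      = (if i ≤ k then (1:ℝ) else 0) - (if j ≤ k then 1 else 0) := by
  simp only [epair_apply]
  rw [Finset.sum_sub_distrib, Finset.sum_ite_eq' (Finset.range (k+1)) i,
    Finset.sum_ite_eq' (Finset.range (k+1)) j]
  simp [Finset.mem_range, Nat.lt_succ_iff]

/-- The subspace of `ℓ^∞` consisting of convergent sequences. -/
def convSubspace : Submodule ℝ ellInf where
  carrier := {x | ∃ L : ℝ, Filter.Tendsto (fun k => x k) Filter.atTop (nhds L)}
  add_mem' := by
    rintro x y ⟨L, hL⟩ ⟨M, hM⟩
    exact ⟨L + M, by simpa [lp.coeFn_add, Pi.add_apply] using hL.add hM⟩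
  zero_mem' :=
    ⟨0, by simpa [lp.coeFn_zero] using
      (tendsto_const_nhds : Filter.Tendsto (fun _ : ℕ => (0:ℝ)) _ _)⟩
  smul_mem' := by
    rintro c x ⟨L, hL⟩
    exact ⟨c * L, by simpa [lp.coeFn_smul, Pi.smul_apply, smul_eq_mul] using hL.const_mul c⟩

/-- The space `c` of convergent real sequences, normed by the supremum norm. -/
abbrev cSpace : Type := ↥convSubspace

/-- `σ` is the summation operator: `σ(x)ₖ = ∑_{j=1}^k x_j` (`0`-indexed here). -/
def IsSummation (σ : ell1 →L[ℝ] cSpace) : Prop :=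
  ∀ x : ell1, ∀ k : ℕ, (↑(σ x) : ellInf) k = ∑ j ∈ Finset.range (k + 1), x j

section SigmaFacts

variable {σ : ell1 →L[ℝ] cSpace}

lemma norm_sigma_eq (y : cSpace) : ‖y‖ = ‖(y : ellInf)‖ := Submodule.coe_norm y

lemma sigma_norm_le (hσ : IsSummation σ) (x : ell1) : ‖σ x‖ ≤ ‖x‖ := by
  rw [norm_sigma_eq]
  refine lp.norm_le_of_forall_le (norm_nonneg x) fun k => ?_
  rw [hσ x k]
  calc ‖∑ j ∈ Finset.range (k+1), x j‖ ≤ ∑ j ∈ Finset.range (k+1), ‖x j‖ :=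
        norm_sum_le _ _
    _ ≤ ‖x‖ := ell1_sum_le x _

lemma sigma_coord_le (hσ : IsSummation σ) (x : ell1) (k : ℕ) :
    ‖∑ j ∈ Finset.range (k+1), x j‖ ≤ ‖σ x‖ := by
  rw [norm_sigma_eq, ← hσ x k]
  exact lp.norm_apply_le_norm (E := fun _ : ℕ => ℝ) (p := (⊤ : ℝ≥0∞)) (by simp)
    ((σ x : ellInf)) k

lemma sigma_epair_ge (hσ : IsSummation σ) (i j : ℕ) (hij : i < j) :
    (1:ℝ) ≤ ‖σ (epair i j)‖ := by
  have h := sigma_coord_le hσ (epair i j) i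
  rw [epair_partial_sum] at h
  have h2 : ¬ (j ≤ i) := by omega
  rw [if_pos (le_refl i), if_neg h2] at h
  have h3 : ‖(1:ℝ) - 0‖ = 1 := by norm_num
  rw [h3] at h
  exact h

end SigmaFacts

/-- The summation functional `x ↦ ∑' j, x j` on `ℓ¹`. -/
def sumFunc : ell1 →L[ℝ] ℝ :=
  LinearMap.mkContinuous
    { toFun := fun x : ell1 => ∑' j, x j
      map_add' := fun x y => by
        have hco : (fun j => (x + y) j) = fun j => x j + y j := by
          ext j; exact congrFun (lp.coeFn_add x y) j
        simp only [hco]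
        exact Summable.tsum_add (ell1_summable x) (ell1_summable y)
      map_smul' := fun c x => by
        have hco : (fun j => (c • x) j) = fun j => c * x j := by
          ext j
          have := congrFun (lp.coeFn_smul c x) j
          simpa [smul_eq_mul] using this
        simp only [hco, RingHom.id_apply, smul_eq_mul]
        exact tsum_mul_left }
    1
    (fun x => by
      simp only [LinearMap.coe_mk, AddHom.coe_mk, one_mul]
      calc ‖∑' j, x j‖ ≤ ∑' j, ‖x j‖ :=
            norm_tsum_le_tsum_norm ⟨_, ell1_hasSum_norm x⟩
        _ = ‖x‖ := (ell1_hasSum_norm x).tsum_eq)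

/-- kernel of the summation functional -/
def kerM : Submodule ℝ ell1 := LinearMap.ker (sumFunc : ell1 →ₗ[ℝ] ℝ)

lemma kerM_closed : IsClosed ((kerM : Submodule ℝ ell1) : Set ell1) :=
  ContinuousLinearMap.isClosed_ker sumFunc

lemma rank_quot_kerM_le : Module.rank ℝ (ell1 ⧸ kerM) ≤ 1 := by
  have e := (sumFunc : ell1 →ₗ[ℝ] ℝ).quotKerEquivRange
  have h1 : Module.rank ℝ (ell1 ⧸ kerM)
      = Module.rank ℝ (LinearMap.range (sumFunc : ell1 →ₗ[ℝ] ℝ)) := e.rank_eq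
  rw [h1]
  have h2 := Submodule.rank_le (LinearMap.range (sumFunc : ell1 →ₗ[ℝ] ℝ))
  simpa [Module.rank_self] using h2

/-- coordinate bound for kernel elements -/
lemma sigma_ker_le {σ : ell1 →L[ℝ] cSpace} (hσ : IsSummation σ) (x : ell1)
    (hx : sumFunc x = 0) : ‖σ x‖ ≤ ‖x‖ / 2 := by
  rw [norm_sigma_eq]
  refine lp.norm_le_of_forall_le (by positivity) fun k => ?_
  rw [hσ x k]
  set S := ∑ j ∈ Finset.range (k+1), x j with hS
  have hsum_norm : Summable (fun i : ℕ => ‖x i‖) := ⟨_, ell1_hasSum_norm x⟩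
  have hAT : ∑ j ∈ Finset.range (k+1), ‖x j‖ + ∑' j, ‖x (j + (k+1))‖ = ‖x‖ := by
    rw [Summable.sum_add_tsum_nat_add (k+1) hsum_norm]
    exact (ell1_hasSum_norm x).tsum_eq
  have hSsum : S + ∑' j, x (j + (k+1)) = 0 := by
    rw [hS, Summable.sum_add_tsum_nat_add (k+1) (ell1_summable x)]
    exact hx
  have h1 : ‖S‖ ≤ ∑ j ∈ Finset.range (k+1), ‖x j‖ := norm_sum_le _ _
  have h2 : ‖S‖ = ‖∑' j, x (j + (k+1))‖ := by
    rw [eq_neg_of_add_eq_zero_left hSsum, norm_neg]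
  have h3 : ‖∑' j, x (j + (k+1))‖ ≤ ∑' j, ‖x (j + (k+1))‖ :=
    norm_tsum_le_tsum_norm ((summable_nat_add_iff (k+1)).2 hsum_norm)
  linarith

/-- lower bound: any admissible subspace has Gelfand sup at least 1/2 -/
lemma lower_bound {σ : ell1 →L[ℝ] cSpace} (hσ : IsSummation σ)
    (M : Submodule ℝ ell1) (hcl : IsClosed (M : Set ell1))
    (hrank : Module.rank ℝ (ell1 ⧸ M) < Cardinal.aleph0) :
    (1:ℝ)/2 ≤ sSup {s : ℝ | ∃ x : ell1, x ∈ M ∧ ‖x‖ ≤ 1 ∧ s = ‖σ x‖} := by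
  haveI := hcl
  haveI : Module.Finite ℝ (ell1 ⧸ M) := Module.rank_lt_aleph0_iff.mp hrank
  set S := {s : ℝ | ∃ x : ell1, x ∈ M ∧ ‖x‖ ≤ 1 ∧ s = ‖σ x‖} with hSdef
  have hbdd : BddAbove S := by
    refine ⟨1, ?_⟩
    rintro s ⟨x, -, hx1, rfl⟩
    exact (sigma_norm_le hσ x).trans hx1
  have hkey : ∀ ε : ℝ, 0 < ε → (1/2 - 2*ε) ≤ sSup S := by
    intro ε hε
    set q : ℕ → (ell1 ⧸ M) := fun j => Submodule.Quotient.mk (lp.single 1 j (1:ℝ)) with hq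
    have hqball : ∀ j, q j ∈ Metric.closedBall (0 : ell1 ⧸ M) 1 := by
      intro j
      rw [Metric.mem_closedBall, dist_zero_right]
      refine (Submodule.Quotient.norm_mk_le _ _).trans ?_
      rw [norm_single_one]
    obtain ⟨a, -, φ, hφ, hconv⟩ :=
      (isCompact_closedBall (0 : ell1 ⧸ M) 1).tendsto_subseq hqball
    obtain ⟨N, hN⟩ := Metric.tendsto_atTop.mp hconv (ε/4) (by positivity)
    set j1 := φ N with hj1
    set j2 := φ (N+1) with hj2
    have hj : j1 < j2 := hφ (Nat.lt_succ_self N)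
    have hdist : ‖q j1 - q j2‖ < ε/2 := by
      have h1 : dist (q j1) a < ε/4 := hN N le_rfl
      have h2 : dist (q j2) a < ε/4 := hN (N+1) (Nat.le_succ N)
      calc ‖q j1 - q j2‖ = dist (q j1) (q j2) := (dist_eq_norm _ _).symm
        _ ≤ dist (q j1) a + dist (q j2) a := dist_triangle_right _ _ _
        _ < ε/4 + ε/4 := add_lt_add h1 h2
        _ = ε/2 := by ring
    have hmkx : ‖(Submodule.Quotient.mk (epair j1 j2) : ell1 ⧸ M)‖ < ε/2 := by
      have hrepr : (Submodule.Quotient.mk (epair j1 j2) : ell1 ⧸ M) = q j1 - q j2 := by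
        rw [hq, epair, Submodule.Quotient.mk_sub]
      rw [hrepr]
      exact hdist
    obtain ⟨m, hm_eq, hm_norm⟩ :=
      Submodule.Quotient.norm_mk_lt
        (Submodule.Quotient.mk (epair j1 j2) : ell1 ⧸ M) (show (0:ℝ) < ε/2 by positivity)
    have hm_norm' : ‖m‖ < ε := by linarith
    set y := epair j1 j2 - m with hy
    have hyM : y ∈ M := by
      have h := (Submodule.Quotient.eq M).mp hm_eq.symm
      simpa [hy] using h
    have hy_norm : ‖y‖ ≤ 2 + ε := by
      calc ‖y‖ ≤ ‖epair j1 j2‖ + ‖m‖ := norm_sub_le _ _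
        _ ≤ 2 + ε := by
            have := norm_epair_le j1 j2
            linarith
    have hσy : 1 - ε ≤ ‖σ y‖ := by
      have h1 : ‖σ (epair j1 j2)‖ ≤ ‖σ y‖ + ‖σ m‖ := by
        have hh : σ (epair j1 j2) = σ y + σ m := by rw [hy, map_sub]; abel
        rw [hh]; exact norm_add_le _ _
      have h2 := sigma_epair_ge hσ j1 j2 hj
      have h3 := sigma_norm_le hσ m
      linarith
    set z := (2+ε)⁻¹ • y with hz
    have h2ε : (0:ℝ) < 2 + ε := by linarith
    have hzM : z ∈ M := M.smul_mem _ hyM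
    have hz_norm : ‖z‖ ≤ 1 := by
      rw [hz, norm_smul, Real.norm_eq_abs, abs_of_pos (by positivity)]
      rw [inv_mul_le_iff₀ h2ε]
      linarith
    have hσz : ‖σ z‖ = (2+ε)⁻¹ * ‖σ y‖ := by
      rw [hz, map_smul, norm_smul, Real.norm_eq_abs, abs_of_pos (by positivity)]
    have hmem : ‖σ z‖ ∈ S := ⟨z, hzM, hz_norm, rfl⟩
    have hfin : 1/2 - 2*ε ≤ ‖σ z‖ := by
      rw [hσz]
      have h4 : (2+ε)⁻¹ * (1 - ε) ≤ (2+ε)⁻¹ * ‖σ y‖ := by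
        gcongr
      have h5 : 1/2 - 2*ε ≤ (2+ε)⁻¹ * (1 - ε) := by
        rw [inv_mul_eq_div, le_div_iff₀ h2ε]
        nlinarith
      linarith
    exact hfin.trans (le_csSup hbdd hmem)
  by_contra hlt
  push_neg at hlt
  have := hkey ((1/2 - sSup S)/4) (by linarith)
  linarith

/-- The `n`-th Gelfand number of the summation operator `σ : ℓ¹ → c`
equals `1/2` for `n ≥ 2`. -/
theorem gelfand_number_summation (n : ℕ) (hn : 2 ≤ n)
    (σ : ell1 →L[ℝ] cSpace) (hσ : IsSummation σ) :
    sInf {r : ℝ | ∃ M : Submodule ℝ ell1, IsClosed (M : Set ell1) ∧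
        Module.rank ℝ (ell1 ⧸ M) < (n : Cardinal) ∧
        r = sSup {s : ℝ | ∃ x : ell1, x ∈ M ∧ ‖x‖ ≤ 1 ∧ s = ‖σ x‖}} = 1 / 2 := by
  set T := {r : ℝ | ∃ M : Submodule ℝ ell1, IsClosed (M : Set ell1) ∧
        Module.rank ℝ (ell1 ⧸ M) < (n : Cardinal) ∧
        r = sSup {s : ℝ | ∃ x : ell1, x ∈ M ∧ ‖x‖ ≤ 1 ∧ s = ‖σ x‖}} with hT
  -- every element of T is at least 1/2
  have h_lb : ∀ r ∈ T, (1:ℝ)/2 ≤ r := by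
    rintro r ⟨M, hcl, hrank, rfl⟩
    exact lower_bound hσ M hcl (hrank.trans (Cardinal.nat_lt_aleph0 n))
  -- the special element
  set S0 := {s : ℝ | ∃ x : ell1, x ∈ kerM ∧ ‖x‖ ≤ 1 ∧ s = ‖σ x‖} with hS0
  have hrank_kerM : Module.rank ℝ (ell1 ⧸ kerM) < (n : Cardinal) := by
    refine lt_of_le_of_lt rank_quot_kerM_le ?_
    have : (1 : ℕ) < n := by omega
    exact_mod_cast this
  have h_mem : sSup S0 ∈ T := ⟨kerM, kerM_closed, hrank_kerM, rfl⟩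
  have h_ub : sSup S0 ≤ 1/2 := by
    refine csSup_le ⟨0, 0, kerM.zero_mem, by simp, by simp⟩ ?_
    rintro s ⟨x, hxker, hx1, rfl⟩
    have hx0 : sumFunc x = 0 := hxker
    have := sigma_ker_le hσ x hx0
    linarith
  have hbddT : BddBelow T := ⟨1/2, h_lb⟩
  refine le_antisymm ((csInf_le hbddT h_mem).trans h_ub) (le_csInf ⟨_, h_mem⟩ h_lb)
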